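/- For every integer n ≥ 4, the number of permutations π of {1,…,n} whose set of peaks is exactly {2, n−1} equals 2^{n−3} · (n−4) · (n−1). -/

import Mathlib

/-- `IsPeak π i` says that the (1-based) position `i` is a peak of the permutation `π` of
`{1,…,n}` (modeled as `Fin n`, zero-based): `2 ≤ i ≤ n-1` and `π(i-1) < π(i) > π(i+1)`. -/
def IsPeak {n : ℕ} (π : Equiv.Perm (Fin n)) (i : ℕ) : Prop :=
  ∃ (h2 : 2 ≤ i) (hn : i < n),
    π ⟨i - 2, by omega⟩ < π ⟨i - 1, by omega⟩ ∧ π ⟨i, hn⟩ < π ⟨i - 1, by omega⟩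

def Valley {k : ℕ} {α : Type*} [LT α] (f : Fin k → α) : Prop :=
  ∀ i : ℕ, ∀ (_ : 0 < i) (h2 : i + 1 < k),
    ¬ (f ⟨i-1, by omega⟩ < f ⟨i, by omega⟩ ∧ f ⟨i+1, h2⟩ < f ⟨i, by omega⟩)

lemma valley_comp_val {k : ℕ} {α : Type*} [Preorder α] {p : α → Prop} (h : Fin k → Subtype p) :
    Valley (fun j => (h j : α)) ↔ Valley h := by
  unfold Valley
  simp only [Subtype.coe_lt_coe]

lemma valley_tail {k : ℕ} {α : Type*} [LT α] {f : Fin (k+1) → α} (hf : Valley f) :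
    Valley (fun j : Fin k => f j.succ) := by
  intro i hi h2 hpk
  refine hf (i+1) (by omega) (by omega) ⟨?_, ?_⟩
  · convert hpk.1 using 2 <;> (apply Fin.ext; simp only [Fin.val_succ] <;> omega)
  · convert hpk.2 using 2 <;> (apply Fin.ext; simp only [Fin.val_succ] <;> omega)

lemma valley_init {k : ℕ} {α : Type*} [LT α] {f : Fin (k+1) → α} (hf : Valley f) :
    Valley (fun j : Fin k => f j.castSucc) := by
  intro i hi h2 hpk
  refine hf i hi (by omega) ⟨?_, ?_⟩
  · convert hpk.1 using 2 <;> (apply Fin.ext; simp only [Fin.coe_castSucc] <;> omega)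
  · convert hpk.2 using 2 <;> (apply Fin.ext; simp only [Fin.coe_castSucc] <;> omega)

lemma valley_cons {k : ℕ} {α : Type*} [LinearOrder α] {M : α} {h : Fin k → α}
    (hmax : ∀ x : α, x ≤ M) (hv : Valley h) : Valley (Fin.cons M h) := by
  intro i hi h2 hpk
  rcases eq_or_lt_of_le (show 1 ≤ i by omega) with h1 | h1
  · -- i = 1 : first entry is M, cannot have ascent
    have e0 : (⟨i-1, by omega⟩ : Fin (k+1)) = 0 := by apply Fin.ext; simp; omega
    rw [e0, Fin.cons_zero] at hpk
    exact absurd hpk.1 (not_lt.mpr (hmax _))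
  · -- i ≥ 2 : peak inside h
    refine hv (i-1) (by omega) (by omega) ⟨?_, ?_⟩
    · have e1 : (⟨i-1, by omega⟩ : Fin (k+1)) = Fin.succ ⟨i-1-1, by omega⟩ := by
        apply Fin.ext; simp; omega
      have e2 : (⟨i, by omega⟩ : Fin (k+1)) = Fin.succ ⟨i-1, by omega⟩ := by
        apply Fin.ext; simp; omega
      rw [e1, e2, Fin.cons_succ, Fin.cons_succ] at hpk
      exact hpk.1
    · have e2 : (⟨i, by omega⟩ : Fin (k+1)) = Fin.succ ⟨i-1, by omega⟩ := by
        apply Fin.ext; simp; omega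
      have e3 : (⟨i+1, h2⟩ : Fin (k+1)) = Fin.succ ⟨i-1+1, by omega⟩ := by
        apply Fin.ext; simp; omega
      rw [e2, e3, Fin.cons_succ, Fin.cons_succ] at hpk
      exact hpk.2

lemma valley_snoc {k : ℕ} {α : Type*} [LinearOrder α] {M : α} {h : Fin k → α}
    (hmax : ∀ x : α, x ≤ M) (hv : Valley h) : Valley (Fin.snoc h M) := by
  intro i hi h2 hpk
  rcases eq_or_lt_of_le (show i + 1 ≤ k by omega) with h1 | h1
  · -- i + 1 = k : last entry is M, cannot have descent into it
    have e0 : (⟨i+1, h2⟩ : Fin (k+1)) = Fin.last k := by apply Fin.ext; simp; omega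
    rw [e0, Fin.snoc_last] at hpk
    exact absurd hpk.2 (not_lt.mpr (hmax _))
  · refine hv i hi (by omega) ⟨?_, ?_⟩
    · have e1 : (⟨i-1, by omega⟩ : Fin (k+1)) = Fin.castSucc ⟨i-1, by omega⟩ := rfl
      have e2 : (⟨i, by omega⟩ : Fin (k+1)) = Fin.castSucc ⟨i, by omega⟩ := rfl
      rw [e1, e2, Fin.snoc_castSucc, Fin.snoc_castSucc] at hpk
      exact hpk.1
    · have e2 : (⟨i, by omega⟩ : Fin (k+1)) = Fin.castSucc ⟨i, by omega⟩ := rfl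
      have e3 : (⟨i+1, h2⟩ : Fin (k+1)) = Fin.castSucc ⟨i+1, by omega⟩ := rfl
      rw [e2, e3, Fin.snoc_castSucc, Fin.snoc_castSucc] at hpk
      exact hpk.2

section Core
variable {k : ℕ} {α : Type} [LinearOrder α] [Fintype α]

noncomputable def consEquiv (hcard : Fintype.card α = k+1) (M : α)
    (g : Fin k ≃ {x : α // x ≠ M}) : Fin (k+1) ≃ α :=
  Equiv.ofBijective (Fin.cons M (fun j => (g j : α)))
    (by
      refine (Fintype.bijective_iff_injective_and_card _).mpr ⟨?_, by simp [hcard]⟩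
      intro x y hxy
      induction x using Fin.cases with
      | zero =>
        induction y using Fin.cases with
        | zero => rfl
        | succ j =>
          rw [Fin.cons_zero, Fin.cons_succ] at hxy
          exact absurd hxy.symm (g j).2
      | succ i =>
        induction y using Fin.cases with
        | zero =>
          rw [Fin.cons_zero, Fin.cons_succ] at hxy
          exact absurd hxy (g i).2
        | succ j =>
          rw [Fin.cons_succ, Fin.cons_succ] at hxy
          exact congrArg Fin.succ (g.injective (Subtype.ext hxy)))

@[simp] lemma consEquiv_zero (hcard : Fintype.card α = k+1) (M : α)
    (g : Fin k ≃ {x : α // x ≠ M}) : consEquiv hcard M g 0 = M := by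
  simp [consEquiv, Equiv.ofBijective_apply]

@[simp] lemma consEquiv_succ (hcard : Fintype.card α = k+1) (M : α)
    (g : Fin k ≃ {x : α // x ≠ M}) (j : Fin k) : consEquiv hcard M g j.succ = (g j : α) := by
  simp [consEquiv, Equiv.ofBijective_apply]

noncomputable def snocEquiv (hcard : Fintype.card α = k+1) (M : α)
    (g : Fin k ≃ {x : α // x ≠ M}) : Fin (k+1) ≃ α :=
  Equiv.ofBijective (Fin.snoc (fun j => (g j : α)) M)
    (by
      refine (Fintype.bijective_iff_injective_and_card _).mpr ⟨?_, by simp [hcard]⟩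
      intro x y hxy
      induction x using Fin.lastCases with
      | last =>
        induction y using Fin.lastCases with
        | last => rfl
        | cast j =>
          rw [Fin.snoc_last, Fin.snoc_castSucc] at hxy
          exact absurd hxy.symm (g j).2
      | cast i =>
        induction y using Fin.lastCases with
        | last =>
          rw [Fin.snoc_last, Fin.snoc_castSucc] at hxy
          exact absurd hxy (g i).2
        | cast j =>
          rw [Fin.snoc_castSucc, Fin.snoc_castSucc] at hxy
          exact congrArg Fin.castSucc (g.injective (Subtype.ext hxy)))

@[simp] lemma snocEquiv_last (hcard : Fintype.card α = k+1) (M : α)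
    (g : Fin k ≃ {x : α // x ≠ M}) : snocEquiv hcard M g (Fin.last k) = M := by
  simp [snocEquiv, Equiv.ofBijective_apply]

@[simp] lemma snocEquiv_castSucc (hcard : Fintype.card α = k+1) (M : α)
    (g : Fin k ≃ {x : α // x ≠ M}) (j : Fin k) :
    snocEquiv hcard M g j.castSucc = (g j : α) := by
  simp [snocEquiv, Equiv.ofBijective_apply]

end Core

lemma valley_card : ∀ (k : ℕ) (α : Type) [LinearOrder α] [Fintype α],
    Fintype.card α = k → Nat.card {f : Fin k ≃ α // Valley ⇑f} = 2^(k-1) := by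
  intro k
  induction k with
  | zero =>
    intro α _ _ hcard
    haveI : IsEmpty α := Fintype.card_eq_zero_iff.mp hcard
    have h1 : Nat.card {f : Fin 0 ≃ α // Valley ⇑f} = Nat.card (Fin 0 ≃ α) :=
      Nat.card_congr (Equiv.subtypeUnivEquiv (fun f => by intro i hi h2; omega))
    rw [h1, Nat.card_eq_fintype_card, Fintype.card_equiv (Equiv.equivOfIsEmpty (Fin 0) α)]
    simp
  | succ m ih =>
    intro α _ _ hcard
    match m, ih with
    | 0, _ =>
      have h1 : Nat.card {f : Fin 1 ≃ α // Valley ⇑f} = Nat.card (Fin 1 ≃ α) :=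
        Nat.card_congr (Equiv.subtypeUnivEquiv (fun f => by intro i hi h2; omega))
      rw [h1, Nat.card_eq_fintype_card,
        Fintype.card_equiv (Fintype.equivFinOfCardEq hcard).symm]
      simp
    | (m'+1), ih =>
      -- main step: k = m'+2, inner k' = m'+1 ≥ 1
      haveI : Nonempty α := Fintype.card_pos_iff.mp (by omega)
      set M : α := Finset.univ.max' Finset.univ_nonempty with hM
      have hmax : ∀ x : α, x ≤ M := fun x => Finset.le_max' _ x (Finset.mem_univ x)
      have hcard' : Fintype.card {x : α // x ≠ M} = m' + 1 := by
        have := Fintype.card_subtype_compl (fun x : α => x = M)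
        simp only [Fintype.card_subtype_eq] at this
        simpa [this, hcard] using by omega
      set X := {g : Fin (m'+1) ≃ {x : α // x ≠ M} // Valley ⇑g} with hX
      let Φ : Bool × X → {f : Fin (m'+2) ≃ α // Valley ⇑f} := fun p =>
        if hb : p.1 then
          ⟨snocEquiv hcard M p.2.1,
            valley_snoc hmax ((valley_comp_val _).mpr p.2.2)⟩
        else
          ⟨consEquiv hcard M p.2.1,
            valley_cons hmax ((valley_comp_val _).mpr p.2.2)⟩
      have hbij : Function.Bijective Φ := by
        constructor
        · rintro ⟨b, g, hg⟩ ⟨b', g', hg'⟩ hpq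
          have heq := congrArg Subtype.val hpq
          cases b <;> cases b' <;> simp only [Φ, dif_pos, dif_neg, Bool.false_eq_true,
            not_false_iff] at heq
          · -- both cons
            have : ∀ j : Fin (m'+1), (g j : α) = (g' j : α) := fun j => by
              have := DFunLike.congr_fun heq j.succ
              simpa using this
            simp only [Prod.mk.injEq, Subtype.mk.injEq]
            exact ⟨trivial, Subtype.ext (Equiv.ext fun j => Subtype.ext (this j))⟩
          · -- cons = snoc : contradiction at 0
            have h0' : M = (g' (0:Fin (m'+1)) : α) := by
              have h1 : consEquiv hcard M g 0 = snocEquiv hcard M g' 0 :=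
                DFunLike.congr_fun heq 0
              rw [consEquiv_zero] at h1
              have h2 := snocEquiv_castSucc hcard M g' 0
              rw [Fin.castSucc_zero] at h2
              exact h1.trans h2
            exact absurd h0'.symm (g' 0).2
          · have h0' : (g (0:Fin (m'+1)) : α) = M := by
              have h1 : snocEquiv hcard M g 0 = consEquiv hcard M g' 0 :=
                DFunLike.congr_fun heq 0
              rw [consEquiv_zero] at h1
              have h2 := snocEquiv_castSucc hcard M g 0
              rw [Fin.castSucc_zero] at h2
              exact h2.symm.trans h1
            exact absurd h0' (g 0).2
          · -- both snoc
            have : ∀ j : Fin (m'+1), (g j : α) = (g' j : α) := fun j => by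
              have := DFunLike.congr_fun heq j.castSucc
              simpa using this
            simp only [Prod.mk.injEq, Subtype.mk.injEq]
            exact ⟨trivial, Subtype.ext (Equiv.ext fun j => Subtype.ext (this j))⟩
        · rintro ⟨f, hf⟩
          have hfp : f (f.symm M) = M := f.apply_symm_apply M
          have hends : f.symm M = 0 ∨ f.symm M = Fin.last (m'+1) := by
            by_contra hcon
            push_neg at hcon
            set p := f.symm M with hp
            have h0 : 0 < p.val := by
              rcases Nat.eq_zero_or_pos p.val with h | h
              · exact absurd (Fin.ext h) hcon.1
              · exact h
            have hl : p.val < m' + 1 := by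
              rcases lt_or_eq_of_le (Nat.lt_succ_iff.mp p.isLt) with h | h
              · exact h
              · exact absurd (Fin.ext h) hcon.2
            refine hf p.val h0 (by omega) ⟨?_, ?_⟩
            · have e : (⟨p.val, by omega⟩ : Fin (m'+2)) = p := Fin.ext rfl
              rw [e, hfp]
              refine lt_of_le_of_ne (hmax _) (fun e2 => ?_)
              have h3 := f.injective (e2.trans hfp.symm)
              have h4 : (⟨p.val - 1, by omega⟩ : Fin (m'+2)).val = p.val := by rw [h3]
              simp only [] at h4; omega
            · have e : (⟨p.val, by omega⟩ : Fin (m'+2)) = p := Fin.ext rfl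
              rw [e, hfp]
              refine lt_of_le_of_ne (hmax _) (fun e2 => ?_)
              have h3 := f.injective (e2.trans hfp.symm)
              have h4 : (⟨p.val + 1, by omega⟩ : Fin (m'+2)).val = p.val := by rw [h3]
              simp only [] at h4; omega
          rcases hends with h0 | h0
          · -- M is first: use cons
            have hne : ∀ j : Fin (m'+1), f j.succ ≠ M := fun j e => by
              have : j.succ = f.symm M := by rw [← e, Equiv.symm_apply_apply]
              rw [h0] at this
              exact Fin.succ_ne_zero j this
            let g : Fin (m'+1) ≃ {x : α // x ≠ M} :=
              Equiv.ofBijective (fun j => ⟨f j.succ, hne j⟩)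
                ((Fintype.bijective_iff_injective_and_card _).mpr
                  ⟨fun a b hab => Fin.succ_injective _ (f.injective (congrArg Subtype.val hab)),
                   by simp [hcard']⟩)
            have hgval : Valley ⇑g := by
              refine (valley_comp_val ⇑g).mp ?_
              have : (fun j => ((g j : {x : α // x ≠ M}) : α)) = fun j : Fin (m'+1) => f j.succ := rfl
              rw [this]
              exact valley_tail hf
            refine ⟨(false, ⟨g, hgval⟩), ?_⟩
            apply Subtype.ext
            simp only [Φ]
            rw [dif_neg (by simp)]
            apply Equiv.ext
            intro x
            induction x using Fin.cases with
            | zero => simp only [consEquiv_zero]; rw [← h0, hfp]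
            | succ j => simp only [consEquiv_succ]; rfl
          · -- M is last: use snoc
            have hne : ∀ j : Fin (m'+1), f j.castSucc ≠ M := fun j e => by
              have : j.castSucc = f.symm M := by rw [← e, Equiv.symm_apply_apply]
              rw [h0] at this
              exact absurd this (Fin.castSucc_lt_last j).ne
            let g : Fin (m'+1) ≃ {x : α // x ≠ M} :=
              Equiv.ofBijective (fun j => ⟨f j.castSucc, hne j⟩)
                ((Fintype.bijective_iff_injective_and_card _).mpr
                  ⟨fun a b hab => Fin.castSucc_injective _ (f.injective (congrArg Subtype.val hab)),
                   by simp [hcard']⟩)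
            have hgval : Valley ⇑g := by
              refine (valley_comp_val ⇑g).mp ?_
              have : (fun j => ((g j : {x : α // x ≠ M}) : α)) = fun j : Fin (m'+1) => f j.castSucc := rfl
              rw [this]
              exact valley_init hf
            refine ⟨(true, ⟨g, hgval⟩), ?_⟩
            apply Subtype.ext
            simp only [Φ]
            rw [dif_pos trivial]
            apply Equiv.ext
            intro x
            induction x using Fin.lastCases with
            | last => simp only [snocEquiv_last]; rw [← h0, hfp]
            | cast j => simp only [snocEquiv_castSucc]; rfl
      have hcount := Nat.card_eq_of_bijective Φ hbij
      rw [Nat.card_prod] at hcount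
      rw [← hcount, ih {x : α // x ≠ M} hcard']
      simp only [Nat.card_eq_fintype_card, Fintype.card_bool]
      simp only [Nat.add_sub_cancel]
      ring

lemma pin_zero {k : ℕ} {α : Type} [LinearOrder α] [Fintype α]
    (hcard : Fintype.card α = k+1) (Q : (Fin k → α) → Prop) (c : ℕ)
    (hc : ∀ v : α, Nat.card {g : Fin k ≃ {x : α // x ≠ v} // Q (fun j => (g j : α))} = c) :
    Nat.card {f : Fin (k+1) ≃ α // Q (fun j => f j.succ)} = Fintype.card α * c := by
  classical
  let Φ : (Σ v : α, {g : Fin k ≃ {x : α // x ≠ v} // Q (fun j => (g j : α))}) →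
      {f : Fin (k+1) ≃ α // Q (fun j => f j.succ)} := fun p =>
    ⟨consEquiv hcard p.1 p.2.1, by
      have : (fun j : Fin k => consEquiv hcard p.1 p.2.1 j.succ)
          = fun j => (p.2.1 j : α) := by
        funext j; exact consEquiv_succ ..
      rw [this]; exact p.2.2⟩
  have hbij : Function.Bijective Φ := by
    constructor
    · rintro ⟨v, g, hg⟩ ⟨v', g', hg'⟩ hpq
      have heq : consEquiv hcard v g = consEquiv hcard v' g' := congrArg Subtype.val hpq
      have hv : v = v' := by
        have h1 := DFunLike.congr_fun heq (0 : Fin (k+1))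
        rwa [consEquiv_zero, consEquiv_zero] at h1
      subst hv
      have hgg : g = g' := by
        apply Equiv.ext; intro j
        apply Subtype.ext
        have h1 := DFunLike.congr_fun heq j.succ
        rwa [consEquiv_succ, consEquiv_succ] at h1
      subst hgg
      rfl
    · rintro ⟨f, hf⟩
      have hne : ∀ j : Fin k, f j.succ ≠ f 0 := fun j e =>
        Fin.succ_ne_zero j (f.injective e)
      have hcard' : Fintype.card {x : α // x ≠ f 0} = k := by
        have h3 : Fintype.card {x : α // x ≠ f 0}
            = Fintype.card α - Fintype.card {x : α // x = f 0} :=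
          Fintype.card_subtype_compl _
        rw [Fintype.card_subtype_eq] at h3
        omega
      let g : Fin k ≃ {x : α // x ≠ f 0} :=
        Equiv.ofBijective (fun j => ⟨f j.succ, hne j⟩)
          ((Fintype.bijective_iff_injective_and_card _).mpr
            ⟨fun a b hab => Fin.succ_injective _ (f.injective (congrArg Subtype.val hab)),
             by simp [hcard']⟩)
      have hQ : Q (fun j => (g j : α)) := hf
      refine ⟨⟨f 0, g, hQ⟩, ?_⟩
      apply Subtype.ext
      apply Equiv.ext
      intro x
      induction x using Fin.cases with
      | zero => exact consEquiv_zero hcard _ _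
      | succ j => exact consEquiv_succ hcard _ _ j
  have hcount := Nat.card_eq_of_bijective Φ hbij
  rw [← hcount, Nat.card_eq_fintype_card, Fintype.card_sigma]
  have : ∀ v : α, Fintype.card {g : Fin k ≃ {x : α // x ≠ v} // Q (fun j => (g j : α))} = c :=
    fun v => by rw [← Nat.card_eq_fintype_card, hc v]
  simp only [this, Finset.sum_const, Finset.card_univ, smul_eq_mul]

lemma pin_last {k : ℕ} {α : Type} [LinearOrder α] [Fintype α]
    (hcard : Fintype.card α = k+1) (Q : (Fin k → α) → Prop) (c : ℕ)
    (hc : ∀ v : α, Nat.card {g : Fin k ≃ {x : α // x ≠ v} // Q (fun j => (g j : α))} = c) :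
    Nat.card {f : Fin (k+1) ≃ α // Q (fun j => f j.castSucc)} = Fintype.card α * c := by
  classical
  let Φ : (Σ v : α, {g : Fin k ≃ {x : α // x ≠ v} // Q (fun j => (g j : α))}) →
      {f : Fin (k+1) ≃ α // Q (fun j => f j.castSucc)} := fun p =>
    ⟨snocEquiv hcard p.1 p.2.1, by
      have : (fun j : Fin k => snocEquiv hcard p.1 p.2.1 j.castSucc)
          = fun j => (p.2.1 j : α) := by
        funext j; exact snocEquiv_castSucc ..
      rw [this]; exact p.2.2⟩
  have hbij : Function.Bijective Φ := by
    constructor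
    · rintro ⟨v, g, hg⟩ ⟨v', g', hg'⟩ hpq
      have heq : snocEquiv hcard v g = snocEquiv hcard v' g' := congrArg Subtype.val hpq
      have hv : v = v' := by
        have h1 := DFunLike.congr_fun heq (Fin.last k)
        rwa [snocEquiv_last, snocEquiv_last] at h1
      subst hv
      have hgg : g = g' := by
        apply Equiv.ext; intro j
        apply Subtype.ext
        have h1 := DFunLike.congr_fun heq j.castSucc
        rwa [snocEquiv_castSucc, snocEquiv_castSucc] at h1
      subst hgg
      rfl
    · rintro ⟨f, hf⟩
      have hne : ∀ j : Fin k, f j.castSucc ≠ f (Fin.last k) := fun j e =>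
        absurd (f.injective e) (Fin.castSucc_lt_last j).ne
      have hcard' : Fintype.card {x : α // x ≠ f (Fin.last k)} = k := by
        have h3 : Fintype.card {x : α // x ≠ f (Fin.last k)}
            = Fintype.card α - Fintype.card {x : α // x = f (Fin.last k)} :=
          Fintype.card_subtype_compl _
        rw [Fintype.card_subtype_eq] at h3
        omega
      let g : Fin k ≃ {x : α // x ≠ f (Fin.last k)} :=
        Equiv.ofBijective (fun j => ⟨f j.castSucc, hne j⟩)
          ((Fintype.bijective_iff_injective_and_card _).mpr
            ⟨fun a b hab => Fin.castSucc_injective _ (f.injective (congrArg Subtype.val hab)),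
             by simp [hcard']⟩)
      have hQ : Q (fun j => (g j : α)) := hf
      refine ⟨⟨f (Fin.last k), g, hQ⟩, ?_⟩
      apply Subtype.ext
      apply Equiv.ext
      intro x
      induction x using Fin.lastCases with
      | last => exact snocEquiv_last hcard _ _
      | cast j => exact snocEquiv_castSucc hcard _ _ j
  have hcount := Nat.card_eq_of_bijective Φ hbij
  rw [← hcount, Nat.card_eq_fintype_card, Fintype.card_sigma]
  have : ∀ v : α, Fintype.card {g : Fin k ≃ {x : α // x ≠ v} // Q (fun j => (g j : α))} = c :=
    fun v => by rw [← Nat.card_eq_fintype_card, hc v]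
  simp only [this, Finset.sum_const, Finset.card_univ, smul_eq_mul]

lemma valley_iff_nopeak {n k s : ℕ} (hsk : s + k ≤ n) (π : Equiv.Perm (Fin n)) :
    Valley (fun j : Fin k => π ⟨s + j.val, by omega⟩) ↔
      ∀ i : ℕ, s + 2 ≤ i → i + 1 ≤ s + k → ¬ IsPeak π i := by
  constructor
  · intro hv i hi1 hi2 hpk
    obtain ⟨h2, hn, hlt1, hlt2⟩ := hpk
    refine hv (i - s - 1) (by omega) (by omega) ⟨?_, ?_⟩
    · convert hlt1 using 3 <;> simp <;> omega
    · convert hlt2 using 3 <;> simp <;> omega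
  · intro h i hi h2 hpk
    refine h (s + i + 1) (by omega) (by omega) ⟨by omega, by omega, ?_, ?_⟩
    · convert hpk.1 using 3 <;> simp <;> omega
    · convert hpk.2 using 3 <;> simp <;> omega

lemma card_ne {α : Type} [Fintype α] [DecidableEq α] (v : α) :
    Fintype.card {x : α // x ≠ v} = Fintype.card α - 1 := by
  have h3 : Fintype.card {x : α // x ≠ v} = Fintype.card α - Fintype.card {x : α // x = v} :=
    Fintype.card_subtype_compl _
  rw [Fintype.card_subtype_eq] at h3
  omega

lemma count_AB (m : ℕ) :
    Nat.card {π : Equiv.Perm (Fin (m+4)) // Valley ⇑π} = 2^(m+3) := by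
  have h := valley_card (m+4) (Fin (m+4)) (by simp)
  simpa using h

lemma count_B (m : ℕ) :
    Nat.card {π : Equiv.Perm (Fin (m+4)) // Valley (fun j : Fin (m+3) => π j.succ)}
      = (m+4) * 2^(m+2) := by
  have h := pin_zero (k := m+3) (α := Fin (m+4)) (by simp)
    (fun h : Fin (m+3) → Fin (m+4) => Valley h) (2^(m+2)) (fun v => by
      have hcard' : Fintype.card {x : Fin (m+4) // x ≠ v} = m+3 := by
        rw [card_ne, Fintype.card_fin]; omega
      have e : Nat.card {g : Fin (m+3) ≃ {x : Fin (m+4) // x ≠ v} //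
          Valley (fun j => (g j : Fin (m+4)))}
          = Nat.card {g : Fin (m+3) ≃ {x : Fin (m+4) // x ≠ v} // Valley ⇑g} :=
        Nat.card_congr (Equiv.subtypeEquivRight (fun g => valley_comp_val ⇑g))
      rw [e, valley_card (m+3) _ hcard']; norm_num)
  rw [Fintype.card_fin] at h
  exact h

lemma count_A (m : ℕ) :
    Nat.card {π : Equiv.Perm (Fin (m+4)) // Valley (fun j : Fin (m+3) => π j.castSucc)}
      = (m+4) * 2^(m+2) := by
  have h := pin_last (k := m+3) (α := Fin (m+4)) (by simp)
    (fun h : Fin (m+3) → Fin (m+4) => Valley h) (2^(m+2)) (fun v => by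
      have hcard' : Fintype.card {x : Fin (m+4) // x ≠ v} = m+3 := by
        rw [card_ne, Fintype.card_fin]; omega
      have e : Nat.card {g : Fin (m+3) ≃ {x : Fin (m+4) // x ≠ v} //
          Valley (fun j => (g j : Fin (m+4)))}
          = Nat.card {g : Fin (m+3) ≃ {x : Fin (m+4) // x ≠ v} // Valley ⇑g} :=
        Nat.card_congr (Equiv.subtypeEquivRight (fun g => valley_comp_val ⇑g))
      rw [e, valley_card (m+3) _ hcard']; norm_num)
  rw [Fintype.card_fin] at h
  exact h

lemma count_S (m : ℕ) :
    Nat.card {π : Equiv.Perm (Fin (m+4)) //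
        Valley (fun j : Fin (m+2) => π (j.castSucc.succ))}
      = (m+4) * ((m+3) * 2^(m+1)) := by
  have h := pin_zero (k := m+3) (α := Fin (m+4)) (by simp)
    (fun h : Fin (m+3) → Fin (m+4) => Valley (fun j : Fin (m+2) => h j.castSucc))
    ((m+3) * 2^(m+1)) (fun v => by
      have hcardβ : Fintype.card {x : Fin (m+4) // x ≠ v} = m+3 := by
        rw [card_ne, Fintype.card_fin]; omega
      have h2 := pin_last (k := m+2) (α := {x : Fin (m+4) // x ≠ v}) hcardβ
        (fun h : Fin (m+2) → {x : Fin (m+4) // x ≠ v} =>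
          Valley (fun j => (h j : Fin (m+4))))
        (2^(m+1)) (fun w => by
          have hcardγ : Fintype.card {x : {x : Fin (m+4) // x ≠ v} // x ≠ w} = m+2 := by
            rw [card_ne, hcardβ]; omega
          have e : Nat.card {g : Fin (m+2) ≃ {x : {x : Fin (m+4) // x ≠ v} // x ≠ w} //
              Valley (fun j => ((g j : {x : Fin (m+4) // x ≠ v}) : Fin (m+4)))}
              = Nat.card {g : Fin (m+2) ≃ {x : {x : Fin (m+4) // x ≠ v} // x ≠ w} //
                  Valley ⇑g} :=
            Nat.card_congr (Equiv.subtypeEquivRight (fun g =>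
              ((valley_comp_val (fun j => (g j : {x : Fin (m+4) // x ≠ v}))).trans
                (valley_comp_val ⇑g))))
          rw [e, valley_card (m+2) _ hcardγ]; norm_num)
      rw [hcardβ] at h2
      exact h2)
  rw [Fintype.card_fin] at h
  exact h

theorem stmt14 (n : ℕ) (hn : 4 ≤ n) :
    Nat.card {π : Equiv.Perm (Fin n) // ∀ i : ℕ, IsPeak π i ↔ (i = 2 ∨ i = n - 1)} =
      2 ^ (n - 3) * (n - 4) * (n - 1) := by
  obtain ⟨m, rfl⟩ : ∃ m, n = m + 4 := ⟨n - 4, by omega⟩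
  classical
  have key : ∀ p : Equiv.Perm (Fin (m+4)) → Prop,
      Nat.card {π // p π} = (Finset.univ.filter p).card := fun p => by
    rw [Nat.card_eq_fintype_card, Fintype.card_subtype]
  -- abbreviations
  set S' : Equiv.Perm (Fin (m+4)) → Prop :=
    fun π => Valley (fun j : Fin (m+2) => π (j.castSucc.succ)) with hS'
  set P2 : Equiv.Perm (Fin (m+4)) → Prop := fun π => IsPeak π 2 with hP2
  set PN : Equiv.Perm (Fin (m+4)) → Prop := fun π => IsPeak π (m+3) with hPN
  have range : ∀ (π : Equiv.Perm (Fin (m+4))) (i : ℕ), IsPeak π i → 2 ≤ i ∧ i < m + 4 := by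
    rintro π i ⟨h2, hn', -⟩; exact ⟨h2, hn'⟩
  -- translations of the valley windows
  have eS : ∀ π : Equiv.Perm (Fin (m+4)),
      S' π ↔ ∀ i, 3 ≤ i → i ≤ m + 2 → ¬ IsPeak π i := by
    intro π
    have e : (fun j : Fin (m+2) => π (j.castSucc.succ))
        = (fun j : Fin (m+2) => π ⟨1 + j.val, by omega⟩) := by
      funext j; exact congrArg π (Fin.ext (by simp; omega))
    simp only [hS']
    rw [e, valley_iff_nopeak (by omega) π]
    constructor
    · intro h i h1 h2; exact h i (by omega) (by omega)
    · intro h i h1 h2; exact h i (by omega) (by omega)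
  have eA : ∀ π : Equiv.Perm (Fin (m+4)),
      Valley (fun j : Fin (m+3) => π j.castSucc) ↔ ∀ i, 2 ≤ i → i ≤ m + 2 → ¬ IsPeak π i := by
    intro π
    have e : (fun j : Fin (m+3) => π j.castSucc)
        = (fun j : Fin (m+3) => π ⟨0 + j.val, by omega⟩) := by
      funext j; exact congrArg π (Fin.ext (by simp))
    rw [e, valley_iff_nopeak (by omega) π]
    constructor
    · intro h i h1 h2; exact h i (by omega) (by omega)
    · intro h i h1 h2; exact h i (by omega) (by omega)
  have eB : ∀ π : Equiv.Perm (Fin (m+4)),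
      Valley (fun j : Fin (m+3) => π j.succ) ↔ ∀ i, 3 ≤ i → i ≤ m + 3 → ¬ IsPeak π i := by
    intro π
    have e : (fun j : Fin (m+3) => π j.succ)
        = (fun j : Fin (m+3) => π ⟨1 + j.val, by omega⟩) := by
      funext j; exact congrArg π (Fin.ext (by simp; omega))
    rw [e, valley_iff_nopeak (by omega) π]
    constructor
    · intro h i h1 h2; exact h i (by omega) (by omega)
    · intro h i h1 h2; exact h i (by omega) (by omega)
  have eAB : ∀ π : Equiv.Perm (Fin (m+4)),
      Valley ⇑π ↔ ∀ i, 2 ≤ i → i ≤ m + 3 → ¬ IsPeak π i := by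
    intro π
    have e : ⇑π = (fun j : Fin (m+4) => π ⟨0 + j.val, by omega⟩) := by
      funext j; exact congrArg π (Fin.ext (by simp))
    rw [e, valley_iff_nopeak (by omega) π]
    constructor
    · intro h i h1 h2; exact h i (by omega) (by omega)
    · intro h i h1 h2; exact h i (by omega) (by omega)
  -- pointwise identifications
  have iT : ∀ π : Equiv.Perm (Fin (m+4)),
      (∀ i, IsPeak π i ↔ (i = 2 ∨ i = m + 4 - 1)) ↔ ((S' π ∧ P2 π) ∧ PN π) := by
    intro π
    constructor
    · intro h
      refine ⟨⟨(eS π).mpr fun i h1 h2 hp => ?_, (h 2).mpr (Or.inl rfl)⟩,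
        (h (m+3)).mpr (Or.inr (by omega))⟩
      rcases (h i).mp hp with rfl | rfl <;> omega
    · rintro ⟨⟨hs, h2⟩, hN⟩ i
      constructor
      · intro hp
        by_contra hcon
        push_neg at hcon
        obtain ⟨r1, r2⟩ := range π i hp
        exact (eS π).mp hs i (by omega) (by omega) hp
      · rintro (rfl | rfl)
        · exact h2
        · have : m + 4 - 1 = m + 3 := by omega
          rw [this]; exact hN
  have iA : ∀ π : Equiv.Perm (Fin (m+4)),
      Valley (fun j : Fin (m+3) => π j.castSucc) ↔ (S' π ∧ ¬ P2 π) := by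
    intro π
    rw [eA π]
    constructor
    · intro h
      exact ⟨(eS π).mpr fun i h1 h2 => h i (by omega) (by omega),
        h 2 (by omega) (by omega)⟩
    · rintro ⟨hs, h2⟩ i h1 h2' hp
      rcases Nat.eq_or_lt_of_le h1 with rfl | hlt
      · exact h2 hp
      · exact (eS π).mp hs i (by omega) (by omega) hp
  have iB : ∀ π : Equiv.Perm (Fin (m+4)),
      Valley (fun j : Fin (m+3) => π j.succ) ↔ (S' π ∧ ¬ PN π) := by
    intro π
    rw [eB π]
    constructor
    · intro h
      exact ⟨(eS π).mpr fun i h1 h2 => h i (by omega) (by omega),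
        h (m+3) (by omega) (by omega)⟩
    · rintro ⟨hs, hN⟩ i h1 h2' hp
      rcases Nat.eq_or_lt_of_le h2' with heq | hlt
      · subst heq; exact hN hp
      · exact (eS π).mp hs i (by omega) (by omega) hp
  have iAB : ∀ π : Equiv.Perm (Fin (m+4)),
      Valley ⇑π ↔ ((S' π ∧ ¬ P2 π) ∧ ¬ PN π) := by
    intro π
    rw [eAB π]
    constructor
    · intro h
      exact ⟨⟨(eS π).mpr fun i h1 h2 => h i (by omega) (by omega),
        h 2 (by omega) (by omega)⟩, h (m+3) (by omega) (by omega)⟩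
    · rintro ⟨⟨hs, h2⟩, hN⟩ i h1 h2' hp
      rcases Nat.eq_or_lt_of_le h1 with rfl | hlt
      · exact h2 hp
      · rcases Nat.eq_or_lt_of_le h2' with heq | hlt2
        · subst heq; exact hN hp
        · exact (eS π).mp hs i (by omega) (by omega) hp
  -- counts
  have cS : (Finset.univ.filter S').card = (m+4) * ((m+3) * 2^(m+1)) := by
    rw [← key]; exact count_S m
  have cA : (Finset.univ.filter (fun π => S' π ∧ ¬ P2 π)).card = (m+4) * 2^(m+2) := by
    rw [show (Finset.univ.filter (fun π => S' π ∧ ¬ P2 π))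
        = Finset.univ.filter (fun π : Equiv.Perm (Fin (m+4)) =>
            Valley (fun j : Fin (m+3) => π j.castSucc)) from
      Finset.filter_congr (fun π _ => (iA π).symm)]
    rw [← key]; exact count_A m
  have cB : (Finset.univ.filter (fun π => S' π ∧ ¬ PN π)).card = (m+4) * 2^(m+2) := by
    rw [show (Finset.univ.filter (fun π => S' π ∧ ¬ PN π))
        = Finset.univ.filter (fun π : Equiv.Perm (Fin (m+4)) =>
            Valley (fun j : Fin (m+3) => π j.succ)) from
      Finset.filter_congr (fun π _ => (iB π).symm)]
    rw [← key]; exact count_B m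
  have cAB : (Finset.univ.filter (fun π => (S' π ∧ ¬ P2 π) ∧ ¬ PN π)).card = 2^(m+3) := by
    rw [show (Finset.univ.filter (fun π => (S' π ∧ ¬ P2 π) ∧ ¬ PN π))
        = Finset.univ.filter (fun π : Equiv.Perm (Fin (m+4)) => Valley ⇑π) from
      Finset.filter_congr (fun π _ => (iAB π).symm)]
    rw [← key]; exact count_AB m
  -- the target count
  rw [key]
  rw [show (Finset.univ.filter
        (fun π : Equiv.Perm (Fin (m+4)) => ∀ i, IsPeak π i ↔ (i = 2 ∨ i = m + 4 - 1)))
      = Finset.univ.filter (fun π => (S' π ∧ P2 π) ∧ PN π) from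
    Finset.filter_congr (fun π _ => iT π)]
  -- inclusion–exclusion via filter splits
  have split1 : (Finset.univ.filter (fun π => S' π ∧ P2 π)).card
      + (Finset.univ.filter (fun π => S' π ∧ ¬ P2 π)).card
      = (Finset.univ.filter S').card := by
    rw [← Finset.filter_filter S' P2, ← Finset.filter_filter S' (fun π => ¬ P2 π)]
    exact Finset.card_filter_add_card_filter_not (p := P2)
  have split2 : (Finset.univ.filter (fun π => (S' π ∧ P2 π) ∧ PN π)).card
      + (Finset.univ.filter (fun π => (S' π ∧ P2 π) ∧ ¬ PN π)).card
      = (Finset.univ.filter (fun π => S' π ∧ P2 π)).card := by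
    rw [← Finset.filter_filter (fun π => S' π ∧ P2 π) PN,
      ← Finset.filter_filter (fun π => S' π ∧ P2 π) (fun π => ¬ PN π)]
    exact Finset.card_filter_add_card_filter_not (p := PN)
  have split3 : (Finset.univ.filter (fun π => (S' π ∧ ¬ P2 π) ∧ PN π)).card
      + (Finset.univ.filter (fun π => (S' π ∧ ¬ P2 π) ∧ ¬ PN π)).card
      = (Finset.univ.filter (fun π => S' π ∧ ¬ P2 π)).card := by
    rw [← Finset.filter_filter (fun π => S' π ∧ ¬ P2 π) PN,
      ← Finset.filter_filter (fun π => S' π ∧ ¬ P2 π) (fun π => ¬ PN π)]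
    exact Finset.card_filter_add_card_filter_not (p := PN)
  have split4 : (Finset.univ.filter (fun π => (S' π ∧ P2 π) ∧ ¬ PN π)).card
      + (Finset.univ.filter (fun π => (S' π ∧ ¬ P2 π) ∧ ¬ PN π)).card
      = (Finset.univ.filter (fun π => S' π ∧ ¬ PN π)).card := by
    have h1 : Finset.univ.filter (fun π => (S' π ∧ P2 π) ∧ ¬ PN π)
        = Finset.univ.filter (fun π => (S' π ∧ ¬ PN π) ∧ P2 π) :=
      Finset.filter_congr (fun π _ => by tauto)
    have h2 : Finset.univ.filter (fun π => (S' π ∧ ¬ P2 π) ∧ ¬ PN π)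
        = Finset.univ.filter (fun π => (S' π ∧ ¬ PN π) ∧ ¬ P2 π) :=
      Finset.filter_congr (fun π _ => by tauto)
    rw [h1, h2, ← Finset.filter_filter (fun π => S' π ∧ ¬ PN π) P2,
      ← Finset.filter_filter (fun π => S' π ∧ ¬ PN π) (fun π => ¬ P2 π)]
    exact Finset.card_filter_add_card_filter_not (p := P2)
  -- final arithmetic
  have ringkey : (m+4) * ((m+3) * 2^(m+1)) + 2^(m+3)
      = 2 ^ (m + 1) * m * (m + 3) + ((m+4) * 2^(m+2) + (m+4) * 2^(m+2)) := by
    have h2 : (2:ℕ)^(m+2) = 2 * 2^(m+1) := by ring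
    have h3 : (2:ℕ)^(m+3) = 4 * 2^(m+1) := by ring
    rw [h2, h3]; ring
  have final : (Finset.univ.filter (fun π => (S' π ∧ P2 π) ∧ PN π)).card
      = 2 ^ (m + 1) * m * (m + 3) := by
    rw [cS] at split1
    rw [cA] at split1 split3
    rw [cB] at split4
    rw [cAB] at split3 split4
    omega
  rw [final]
  have e1 : m + 4 - 3 = m + 1 := by omega
  have e2 : m + 4 - 4 = m := by omega
  have e3 : m + 4 - 1 = m + 3 := by omega
  rw [e1, e2, e3]
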